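/- Let m ≥ 3 be an integer that is not squarefree (i.e., p² ∣ m for some prime p). Then for every z ∈ ℂ, the infinite product ∏_{k=1}^{∞} Φ_m(z/k) converges (as the limit of partial products over 1 ≤ k ≤ N) and equals ∏_{1 ≤ j ≤ m−1, gcd(j,m)=1} 1/Γ(1 − z·e^{2πij/m}), where Φ_m is the m-th cyclotomic polynomial and 1/Γ is the entire reciprocal Gamma function; moreover, for z ≠ 0 this common value also equals (1/z^{φ(m)}) · ∏_{1 ≤ j ≤ m−1, gcd(j,m)=1} 1/Γ(−z·e^{2πij/m}). -/

import Mathlib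

open Filter Finset

private lemma aux_exp_add (m a b : ℕ) :
    Complex.exp (2 * (Real.pi : ℂ) * Complex.I * ((a + b : ℕ) : ℂ) / m) =
      Complex.exp (2 * (Real.pi : ℂ) * Complex.I * (a : ℂ) / m) *
      Complex.exp (2 * (Real.pi : ℂ) * Complex.I * (b : ℂ) / m) := by
  rw [← Complex.exp_add]
  congr 1
  push_cast
  ring

private lemma aux_exp_mod (m a : ℕ) (hm : m ≠ 0) :
    Complex.exp (2 * (Real.pi : ℂ) * Complex.I * ((a % m : ℕ) : ℂ) / m) =
      Complex.exp (2 * (Real.pi : ℂ) * Complex.I * (a : ℂ) / m) := by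
  have hm' : (m : ℂ) ≠ 0 := Nat.cast_ne_zero.mpr hm
  conv_rhs => rw [← Nat.mod_add_div a m, aux_exp_add]
  have h1 : Complex.exp (2 * (Real.pi : ℂ) * Complex.I * ((m * (a / m) : ℕ) : ℂ) / m) = 1 := by
    obtain ⟨q, hq⟩ : ∃ q : ℕ, a / m = q := ⟨a / m, rfl⟩
    rw [hq, show (2 * (Real.pi : ℂ) * Complex.I * ((m * q : ℕ) : ℂ) / m)
        = ((q : ℕ) : ℤ) * (2 * (Real.pi : ℂ) * Complex.I) by
      push_cast; field_simp]
    exact Complex.exp_int_mul_two_pi_mul_I _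
  rw [h1, mul_one]

private lemma aux_prod_cpow {x : ℂ} (hx : x ≠ 0) (s : Finset ℕ) (f : ℕ → ℂ) :
    ∏ j ∈ s, x ^ (f j) = x ^ (∑ j ∈ s, f j) := by
  classical
  induction s using Finset.induction_on with
  | empty => simp
  | insert _ _ h ih =>
      rw [Finset.prod_insert h, Finset.sum_insert h, Complex.cpow_add _ _ hx, ih]

/-- Theorem 6 -/
theorem infinite_product_cyclotomic (m : ℕ) (hm : 3 ≤ m) (hsq : ¬ Squarefree m) (z : ℂ) :
    Tendsto (fun N : ℕ => ∏ k ∈ Icc 1 N, (Polynomial.cyclotomic m ℂ).eval (z / (k : ℂ)))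
      atTop
      (nhds (∏ j ∈ (Icc 1 (m - 1)).filter (fun j => Nat.gcd j m = 1),
        (Complex.Gamma (1 - z *
          Complex.exp (2 * (Real.pi : ℂ) * Complex.I * (j : ℂ) / (m : ℂ))))⁻¹)) ∧
    (z ≠ 0 →
      ∏ j ∈ (Icc 1 (m - 1)).filter (fun j => Nat.gcd j m = 1),
          (Complex.Gamma (1 - z *
            Complex.exp (2 * (Real.pi : ℂ) * Complex.I * (j : ℂ) / (m : ℂ))))⁻¹
        = 1 / z ^ m.totient *
          ∏ j ∈ (Icc 1 (m - 1)).filter (fun j => Nat.gcd j m = 1),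
            (Complex.Gamma (-(z *
              Complex.exp (2 * (Real.pi : ℂ) * Complex.I * (j : ℂ) / (m : ℂ)))))⁻¹) := by
  classical
  have hm0 : m ≠ 0 := by omega
  have hm1 : 1 < m := by omega
  haveI : NeZero m := ⟨hm0⟩
  set S : Finset ℕ := (Icc 1 (m - 1)).filter (fun j => Nat.gcd j m = 1) with hS
  set e : ℕ → ℂ := fun j => Complex.exp (2 * (Real.pi : ℂ) * Complex.I * (j : ℂ) / (m : ℂ))
    with he
  have he_val : ∀ a : ℕ,
      e a = Complex.exp (2 * (Real.pi : ℂ) * Complex.I * (a : ℂ) / (m : ℂ)) := fun a => rfl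
  have hene : ∀ j, e j ≠ 0 := fun j => Complex.exp_ne_zero _
  set ζ : ℂ := Complex.exp (2 * (Real.pi : ℂ) * Complex.I / (m : ℂ)) with hζdef
  have hζ : IsPrimitiveRoot ζ m := Complex.isPrimitiveRoot_exp m hm0
  have hpow : ∀ j : ℕ, e j = ζ ^ j := by
    intro j
    rw [he_val, hζdef, ← Complex.exp_nat_mul]
    congr 1
    ring
  have hmemS : ∀ j ∈ S, 1 ≤ j ∧ j < m ∧ Nat.gcd j m = 1 := by
    intro j hj
    obtain ⟨h1, h2⟩ := Finset.mem_filter.mp hj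
    rw [Finset.mem_Icc] at h1
    exact ⟨h1.1, by omega, h2⟩
  -- factorization of the cyclotomic polynomial
  have hfact : ∀ x : ℂ, (Polynomial.cyclotomic m ℂ).eval x = ∏ j ∈ S, (x - (e j)⁻¹) := by
    intro x
    rw [Polynomial.cyclotomic_eq_prod_X_sub_primitiveRoots hζ, Polynomial.eval_prod]
    simp only [Polynomial.eval_sub, Polynomial.eval_X, Polynomial.eval_C]
    refine (Finset.prod_bij (fun j _ => (e j)⁻¹) ?_ ?_ ?_ ?_).symm
    · intro j hj
      obtain ⟨hj1, hj2, hj3⟩ := hmemS j hj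
      rw [mem_primitiveRoots (by omega : 0 < m)]
      have h2 : IsPrimitiveRoot (e j) m := by
        rw [hpow j]; exact hζ.pow_of_coprime j hj3
      exact h2.inv
    · intro j1 h1 j2 h2 heq
      have : e j1 = e j2 := inv_injective heq
      rw [hpow j1, hpow j2] at this
      exact hζ.pow_inj (hmemS j1 h1).2.1 (hmemS j2 h2).2.1 this
    · intro μ hμ
      rw [mem_primitiveRoots (by omega : 0 < m)] at hμ
      have hinv : IsPrimitiveRoot μ⁻¹ m := hμ.inv
      obtain ⟨i, hi, hie⟩ := hζ.eq_pow_of_pow_eq_one hinv.pow_eq_one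
      have hcop : Nat.Coprime i m := by
        refine (hζ.pow_iff_coprime (by omega : 0 < m) i).mp ?_
        rw [hie]; exact hinv
      have hi0 : i ≠ 0 := by
        rintro rfl
        have : m = 1 := by simpa [Nat.coprime_zero_left] using hcop
        omega
      refine ⟨i, Finset.mem_filter.mpr ⟨Finset.mem_Icc.mpr ⟨by omega, by omega⟩, hcop⟩, ?_⟩
      show (e i)⁻¹ = μ
      rw [hpow i, hie, inv_inv]
    · intro j hj
      rfl
  -- value at 0
  have hΦ0 : ∏ j ∈ S, (-(e j)⁻¹) = 1 := by
    have h0 := hfact 0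
    rw [← Polynomial.coeff_zero_eq_eval_zero, Polynomial.cyclotomic_coeff_zero ℂ hm1] at h0
    simpa [zero_sub] using h0.symm
  -- sum of primitive roots is zero
  have hsum : ∑ j ∈ S, e j = 0 := by
    obtain ⟨p, hp, hpp⟩ : ∃ p, Nat.Prime p ∧ p * p ∣ m := by
      rw [Nat.squarefree_iff_prime_squarefree] at hsq
      push_neg at hsq
      obtain ⟨p, hp, h⟩ := hsq
      exact ⟨p, hp, h⟩
    have hpm : p ∣ m := dvd_trans (dvd_mul_right p p) hpp
    set c := m / p with hc
    have hcm : p * c = m := Nat.mul_div_cancel' hpm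
    have hp2 : 2 ≤ p := hp.two_le
    have hcpos : 0 < c := by
      rcases Nat.eq_zero_or_pos c with h | h
      · rw [h, Nat.mul_zero] at hcm; omega
      · exact h
    have hclt : c < m := by
      rw [← hcm]
      exact lt_mul_iff_one_lt_left hcpos |>.mpr (by omega)
    have hrad : ∀ q, Nat.Prime q → q ∣ m → q ∣ c := by
      intro q hq hqm
      rcases eq_or_ne q p with rfl | hne
      · have h1 : q * q ∣ q * c := hcm ▸ hpp
        exact (Nat.mul_dvd_mul_iff_left hq.pos).mp h1
      · have h1 : q ∣ p * c := hcm ▸ hqm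
        rcases (Nat.Prime.dvd_mul hq).mp h1 with h | h
        · exact absurd ((Nat.prime_dvd_prime_iff_eq hq hp).mp h) hne
        · exact h
    have hshift : ∀ c', (∀ q, Nat.Prime q → q ∣ m → q ∣ c') → ∀ j ∈ S, (j + c') % m ∈ S := by
      intro c' hc' j hj
      obtain ⟨hj1, hj2, hj3⟩ := hmemS j hj
      have hco : Nat.Coprime (j + c') m := by
        by_contra hco
        obtain ⟨q, hq, hq1, hq2⟩ := Nat.Prime.not_coprime_iff_dvd.mp hco
        have hqc : q ∣ c' := hc' q hq hq2
        have hqj : q ∣ j := by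
          have := Nat.dvd_sub hq1 hqc
          rwa [Nat.add_sub_cancel] at this
        have hdvd1 : q ∣ 1 := hj3 ▸ Nat.dvd_gcd hqj hq2
        exact hq.one_lt.ne' (Nat.dvd_one.mp hdvd1)
      have hmod : Nat.gcd ((j + c') % m) m = 1 := by
        rw [← Nat.gcd_rec, Nat.gcd_comm]
        exact hco
      have hne0 : (j + c') % m ≠ 0 := by
        intro h0
        rw [h0, Nat.gcd_zero_left] at hmod
        omega
      have hlt : (j + c') % m < m := Nat.mod_lt _ (by omega)
      exact Finset.mem_filter.mpr ⟨Finset.mem_Icc.mpr ⟨by omega, by omega⟩, hmod⟩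
    set ω := e c with hω
    have homega : ω ≠ 1 := by
      intro h
      rw [hω, he_val] at h
      obtain ⟨n, hn⟩ := Complex.exp_eq_one_iff.mp h
      have hmne : (m : ℂ) ≠ 0 := Nat.cast_ne_zero.mpr hm0
      have h2 : (c : ℂ) = (n : ℂ) * m := by
        have hne2 : (2 * (Real.pi : ℂ) * Complex.I) ≠ 0 := by
          simp [Complex.ofReal_ne_zero, Real.pi_ne_zero, Complex.I_ne_zero]
        apply mul_left_cancel₀ hne2
        field_simp [hmne] at hn
        linear_combination (2 * (Real.pi : ℂ) * Complex.I) * hn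
      have h3 : (c : ℤ) = n * m := by exact_mod_cast h2
      rcases le_or_gt n 0 with hn0 | hn0
      · have : (n : ℤ) * m ≤ 0 := mul_nonpos_of_nonpos_of_nonneg hn0 (by positivity)
        omega
      · have h1n : (1 : ℤ) ≤ n := hn0
        have : (m : ℤ) ≤ n * m := le_mul_of_one_le_left (by positivity) h1n
        omega
    have hcle : c ≤ m := le_of_lt hclt
    have h1 : ∑ j ∈ S, e ((j + c) % m) = ∑ j ∈ S, e j := by
      refine Finset.sum_nbij' (i := fun j => (j + c) % m) (j := fun j => (j + (m - c)) % m)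
        (hshift c hrad) (hshift (m - c) (fun q hq hqm => Nat.dvd_sub hqm (hrad q hq hqm)))
        ?_ ?_ ?_
      · intro a ha
        obtain ⟨ha1, ha2, _⟩ := hmemS a ha
        show ((a + c) % m + (m - c)) % m = a
        rw [Nat.mod_add_mod, show a + c + (m - c) = a + m by omega, Nat.add_mod_right,
          Nat.mod_eq_of_lt ha2]
      · intro a ha
        obtain ⟨ha1, ha2, _⟩ := hmemS a ha
        show ((a + (m - c)) % m + c) % m = a
        rw [Nat.mod_add_mod, show a + (m - c) + c = a + m by omega, Nat.add_mod_right,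
          Nat.mod_eq_of_lt ha2]
      · intro a ha
        rfl
    have hstep : ∑ j ∈ S, e j = (∑ j ∈ S, e j) * ω := by
      conv_lhs => rw [← h1]
      rw [Finset.sum_mul]
      refine Finset.sum_congr rfl fun j hj => ?_
      rw [he_val, he_val, hω, he_val, aux_exp_mod m (j + c) hm0, aux_exp_add]
    have hzero : (∑ j ∈ S, e j) * (1 - ω) = 0 := by linear_combination hstep
    rcases mul_eq_zero.mp hzero with h | h
    · exact h
    · exact absurd (sub_eq_zero.mp h).symm homega
  -- cardinality
  have hcard : S.card = m.totient := by
    rw [Nat.totient]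
    congr 1
    ext j
    simp only [hS, Finset.mem_filter, Finset.mem_Icc, Finset.mem_range]
    constructor
    · rintro ⟨⟨h1, h2⟩, h3⟩
      exact ⟨by omega, Nat.coprime_comm.mp h3⟩
    · rintro ⟨h1, h2⟩
      have h2' : Nat.gcd j m = 1 := Nat.coprime_comm.mp h2
      have hj0 : j ≠ 0 := by
        rintro rfl
        rw [Nat.gcd_zero_left] at h2'
        omega
      exact ⟨⟨by omega, by omega⟩, h2'⟩
  -- part 2
  have part2 : z ≠ 0 → (∏ j ∈ S, (Complex.Gamma (1 - z * e j))⁻¹)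
      = 1 / z ^ m.totient * ∏ j ∈ S, (Complex.Gamma (-(z * e j)))⁻¹ := by
    intro hz
    have hprod_e : ∏ j ∈ S, (-(e j)) = 1 := by
      have h1 : ∏ j ∈ S, (-(e j)⁻¹) = ∏ j ∈ S, (-(e j))⁻¹ := by
        refine Finset.prod_congr rfl fun j _ => ?_
        rw [inv_neg]
      rw [h1, Finset.prod_inv_distrib] at hΦ0
      exact inv_eq_one.mp hΦ0
    have hstep : ∀ j ∈ S, (Complex.Gamma (1 - z * e j))⁻¹
        = (-(z * e j))⁻¹ * (Complex.Gamma (-(z * e j)))⁻¹ := by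
      intro j hj
      have hne : -(z * e j) ≠ 0 := neg_ne_zero.mpr (mul_ne_zero hz (hene j))
      rw [show (1 : ℂ) - z * e j = -(z * e j) + 1 by ring, Complex.Gamma_add_one _ hne, mul_inv]
    rw [Finset.prod_congr rfl hstep, Finset.prod_mul_distrib]
    congr 1
    have hval : ∏ j ∈ S, (-(z * e j)) = z ^ m.totient := by
      have h2 : ∀ j ∈ S, -(z * e j) = z * (-(e j)) := fun j _ => by ring
      rw [Finset.prod_congr rfl h2, Finset.prod_mul_distrib, Finset.prod_const, hprod_e,
        mul_one, hcard]
    rw [Finset.prod_inv_distrib, hval, one_div]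
  -- partial products
  have hP : ∀ N : ℕ, ∏ k ∈ Icc (1:ℕ) N, (Polynomial.cyclotomic m ℂ).eval (z / (k : ℂ))
      = ∏ j ∈ S, ∏ k ∈ Icc (1:ℕ) N, (1 - z * e j / (k:ℂ)) := by
    intro N
    calc ∏ k ∈ Icc (1:ℕ) N, (Polynomial.cyclotomic m ℂ).eval (z / (k : ℂ))
        = ∏ k ∈ Icc (1:ℕ) N, ∏ j ∈ S, (1 - z * e j / (k:ℂ)) := by
          refine Finset.prod_congr rfl fun k hk => ?_
          have hk1 : 1 ≤ k := (Finset.mem_Icc.mp hk).1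
          have hk0 : (k : ℂ) ≠ 0 := Nat.cast_ne_zero.mpr (by omega)
          rw [hfact]
          have h2 : ∀ j ∈ S, z / (k:ℂ) - (e j)⁻¹ = (-(e j)⁻¹) * (1 - z * e j / (k:ℂ)) := by
            intro j hj
            have hej : (e j)⁻¹ * e j = 1 := inv_mul_cancel₀ (hene j)
            linear_combination (-(z) / (k:ℂ)) * hej
          rw [Finset.prod_congr rfl h2, Finset.prod_mul_distrib, hΦ0, one_mul]
      _ = ∏ j ∈ S, ∏ k ∈ Icc (1:ℕ) N, (1 - z * e j / (k:ℂ)) := Finset.prod_comm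
  -- part 1
  have part1 : Tendsto (fun N : ℕ => ∏ k ∈ Icc (1:ℕ) N, (Polynomial.cyclotomic m ℂ).eval (z / (k : ℂ)))
      atTop (nhds (∏ j ∈ S, (Complex.Gamma (1 - z * e j))⁻¹)) := by
    by_cases hint : ∃ j ∈ S, ∃ n : ℕ, z * e j = n + 1
    · obtain ⟨j0, hj0, n, hn⟩ := hint
      have hzero : (∏ j ∈ S, (Complex.Gamma (1 - z * e j))⁻¹) = 0 := by
        refine Finset.prod_eq_zero hj0 ?_
        rw [hn, show (1 : ℂ) - ((n : ℂ) + 1) = -(n : ℕ) by push_cast; ring,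
          Complex.Gamma_neg_nat_eq_zero, inv_zero]
      rw [hzero]
      have hev : ∀ᶠ N in atTop,
          (∏ k ∈ Icc (1:ℕ) N, (Polynomial.cyclotomic m ℂ).eval (z / (k : ℂ))) = 0 := by
        filter_upwards [eventually_ge_atTop (n + 1)] with N hN
        rw [hP]
        refine Finset.prod_eq_zero hj0
          (Finset.prod_eq_zero (Finset.mem_Icc.mpr ⟨by omega, hN⟩) ?_)
        rw [hn]
        have hne : ((n : ℂ) + 1) ≠ 0 := Nat.cast_add_one_ne_zero n
        push_cast
        rw [div_self hne]
        ring
      exact Tendsto.congr' (hev.mono fun N h => h.symm) tendsto_const_nhds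
    · push_neg at hint
      have hGamne : ∀ j ∈ S, Complex.Gamma (1 - z * e j) ≠ 0 := by
        intro j hj h0
        obtain ⟨n, hn⟩ := (Complex.Gamma_eq_zero_iff _).mp h0
        exact hint j hj n (by linear_combination -hn)
      have hfacne : ∀ j ∈ S, ∀ k : ℕ, 1 ≤ k → ((k : ℂ) - z * e j) ≠ 0 := by
        intro j hj k hk h0
        refine hint j hj (k - 1) ?_
        rw [Nat.cast_sub hk]
        push_cast
        linear_combination -h0
      have hkey : ∀ N : ℕ, 1 ≤ N → ∏ j ∈ S, ∏ k ∈ Icc (1:ℕ) (N + 1), (1 - z * e j / (k:ℂ))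
          = ((N : ℂ) / (N + 1)) ^ S.card
            * (∏ j ∈ S, Complex.GammaSeq (1 - z * e j) N)⁻¹ := by
        intro N hN
        have hNne : (N : ℂ) ≠ 0 := Nat.cast_ne_zero.mpr (by omega)
        have hN1ne : ((N : ℂ) + 1) ≠ 0 := Nat.cast_add_one_ne_zero N
        have hfne : ((N.factorial : ℕ) : ℂ) ≠ 0 := Nat.cast_ne_zero.mpr (Nat.factorial_ne_zero N)
        have hA : ∀ j ∈ S, (∏ k ∈ Icc (1:ℕ) (N + 1), ((k : ℂ) - z * e j)) ≠ 0 := fun j hj =>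
          Finset.prod_ne_zero_iff.mpr fun k hk => hfacne j hj k (Finset.mem_Icc.mp hk).1
        have hQ : ∀ j ∈ S, ∏ k ∈ Icc (1:ℕ) (N + 1), (1 - z * e j / (k:ℂ))
            = (∏ k ∈ Icc (1:ℕ) (N + 1), ((k : ℂ) - z * e j)) / (((N + 1).factorial : ℕ) : ℂ) := by
          intro j hj
          have h2 : ∀ k ∈ Icc (1:ℕ) (N + 1), (1 - z * e j / (k:ℂ)) = ((k : ℂ) - z * e j) / (k:ℂ) := by
            intro k hk
            have hk1 : 1 ≤ k := (Finset.mem_Icc.mp hk).1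
            have hk0 : (k : ℂ) ≠ 0 := Nat.cast_ne_zero.mpr (by omega)
            field_simp
          rw [Finset.prod_congr rfl h2, Finset.prod_div_distrib]
          congr 1
          rw [← Nat.cast_prod]
          congr 1
          rw [← Finset.Ico_add_one_right_eq_Icc, Finset.prod_Ico_id_eq_factorial]
        have hGS : ∀ j ∈ S, Complex.GammaSeq (1 - z * e j) N
            = (N : ℂ) ^ (1 - z * e j) * ((N.factorial : ℕ) : ℂ)
              / ∏ k ∈ Icc (1:ℕ) (N + 1), ((k : ℂ) - z * e j) := by
          intro j hj
          rw [Complex.GammaSeq]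
          congr 1
          rw [← Finset.Ico_add_one_right_eq_Icc, Finset.prod_Ico_eq_prod_range]
          refine Finset.prod_congr (by norm_num) fun i _ => ?_
          push_cast
          ring
        have hprodQG : (∏ j ∈ S, ∏ k ∈ Icc (1:ℕ) (N + 1), (1 - z * e j / (k:ℂ)))
            * (∏ j ∈ S, Complex.GammaSeq (1 - z * e j) N)
            = ((N : ℂ) / (N + 1)) ^ S.card := by
          rw [← Finset.prod_mul_distrib]
          have h3 : ∀ j ∈ S, (∏ k ∈ Icc (1:ℕ) (N + 1), (1 - z * e j / (k:ℂ)))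
              * Complex.GammaSeq (1 - z * e j) N
              = (N : ℂ) ^ (1 - z * e j) / ((N : ℂ) + 1) := by
            intro j hj
            rw [hQ j hj, hGS j hj]
            have hfac1 : (((N + 1).factorial : ℕ) : ℂ) = ((N : ℂ) + 1) * ((N.factorial : ℕ) : ℂ) := by
              rw [Nat.factorial_succ]
              push_cast
              ring
            rw [hfac1]
            field_simp [hA j hj]
          rw [Finset.prod_congr rfl h3, Finset.prod_div_distrib, Finset.prod_const,
            aux_prod_cpow hNne]
          have hsum1 : ∑ j ∈ S, (1 - z * e j) = (S.card : ℂ) := by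
            rw [Finset.sum_sub_distrib, Finset.sum_const, nsmul_eq_mul, mul_one,
              ← Finset.mul_sum, hsum, mul_zero, sub_zero]
          rw [hsum1, Complex.cpow_natCast, div_pow]
        have hGSne : (∏ j ∈ S, Complex.GammaSeq (1 - z * e j) N) ≠ 0 := by
          rw [Finset.prod_ne_zero_iff]
          intro j hj
          rw [hGS j hj]
          refine div_ne_zero (mul_ne_zero ?_ hfne) (hA j hj)
          intro h0
          rw [Complex.cpow_eq_zero_iff] at h0
          exact hNne h0.1
        exact (eq_mul_inv_iff_mul_eq₀ hGSne).mpr hprodQG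
      have hGlim : Tendsto (fun N => ∏ j ∈ S, Complex.GammaSeq (1 - z * e j) N) atTop
          (nhds (∏ j ∈ S, Complex.Gamma (1 - z * e j))) :=
        tendsto_finset_prod S (fun j _ => Complex.GammaSeq_tendsto_Gamma _)
      have hGprodne : (∏ j ∈ S, Complex.Gamma (1 - z * e j)) ≠ 0 :=
        Finset.prod_ne_zero_iff.mpr hGamne
      have hclim : Tendsto (fun N : ℕ => ((N : ℂ) / (N + 1)) ^ S.card) atTop (nhds 1) := by
        have h1 := (tendsto_natCast_div_add_atTop (1 : ℂ)).pow S.card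
        simpa using h1
      have h2 : Tendsto (fun N : ℕ => ((N : ℂ) / (N + 1)) ^ S.card
          * (∏ j ∈ S, Complex.GammaSeq (1 - z * e j) N)⁻¹) atTop
          (nhds (1 * (∏ j ∈ S, Complex.Gamma (1 - z * e j))⁻¹)) :=
        hclim.mul (hGlim.inv₀ hGprodne)
      rw [one_mul, ← Finset.prod_inv_distrib] at h2
      have hmain : Tendsto (fun N : ℕ =>
          ∏ k ∈ Icc (1:ℕ) (N + 1), (Polynomial.cyclotomic m ℂ).eval (z / (k : ℂ))) atTop
          (nhds (∏ j ∈ S, (Complex.Gamma (1 - z * e j))⁻¹)) := by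
        refine Tendsto.congr' ?_ h2
        filter_upwards [eventually_ge_atTop 1] with N hN
        rw [hP, hkey N hN]
      exact (tendsto_add_atTop_iff_nat 1).mp hmain
  exact ⟨part1, part2⟩
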